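/- Let (k_n)_{n≥1} be a sequence of positive integers with partial sums s_n, and let (d_i)_{i≥1} be a bounded nonnegative real sequence such that limsup_{n→∞} (1/k_n)·(d_1 + ⋯ + d_{s_n}) > 0. Let D = diag(d). Then there do not exist a compact operator C and a bounded operator Z on H, at least one of which is block tridiagonal with central block sizes k_n, such that D = C∘Z − Z∘C. Equivalently: if D = C∘Z − Z∘C with Z bounded and at least one of C, Z block tridiagonal with central block sizes k_n, then C is not compact. -/

import Mathlib

open Filter

variable {H : Type*} [NormedAddCommGroup H] [InnerProductSpace ℂ H] [CompleteSpace H]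

/-- Partial sums `s n = k 1 + ⋯ + k n` of a sequence of block sizes (with `s 0 = 0`). -/
def psum (k : ℕ → ℕ) (n : ℕ) : ℕ := ∑ j ∈ Finset.Icc 1 n, k j

/-- The block index `b i` of an index `i ≥ 1`: the unique `n` with `s (n-1) < i ≤ s n`
(realized as the least `n` with `i ≤ s n`). -/
noncomputable def blockIdx (k : ℕ → ℕ) (i : ℕ) : ℕ := sInf {n | i ≤ psum k n}

/-- A bounded operator `W` is block tridiagonal with central block sizes `k n` if
`⟪e i, W (e j)⟫ = 0` whenever `|b i - b j| ≥ 2`. -/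
def IsBlockTridiagonal (e : HilbertBasis ℕ+ ℂ H) (k : ℕ → ℕ) (W : H →L[ℂ] H) : Prop :=
  ∀ i j : ℕ+, 2 ≤ |(blockIdx k (i : ℕ) : ℤ) - (blockIdx k (j : ℕ) : ℤ)| →
    (inner ℂ (e i) (W (e j)) : ℂ) = 0

/-- The orthogonal projection `P n` onto `span {e i : s (n-1) < i ≤ s n}`. -/
noncomputable def blockProj (e : HilbertBasis ℕ+ ℂ H) (k : ℕ → ℕ) (n : ℕ) : H →L[ℂ] H :=
  ∑ i ∈ (Finset.Ioc (psum k (n - 1)) (psum k n)).attach,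
    (innerSL ℂ (e ⟨i.1, Nat.lt_of_le_of_lt (Nat.zero_le _) (Finset.mem_Ioc.mp i.2).1⟩)).smulRight
      (e ⟨i.1, Nat.lt_of_le_of_lt (Nat.zero_le _) (Finset.mem_Ioc.mp i.2).1⟩)

/-- The partial trace `∑_{j=1}^m ⟪e j, T (e j)⟫`. -/
noncomputable def ptrace (e : HilbertBasis ℕ+ ℂ H) (T : H →L[ℂ] H) (m : ℕ) : ℂ :=
  ∑ i ∈ (Finset.Icc 1 m).attach,
    (inner ℂ (e ⟨i.1, (Finset.mem_Icc.mp i.2).1⟩) (T (e ⟨i.1, (Finset.mem_Icc.mp i.2).1⟩)) : ℂ)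

/-- The upper off-diagonal block `A n (W) = P n ∘ W ∘ P (n+1)`. -/
noncomputable def blockA (e : HilbertBasis ℕ+ ℂ H) (k : ℕ → ℕ) (n : ℕ) (W : H →L[ℂ] H) :
    H →L[ℂ] H :=
  blockProj e k n ∘L W ∘L blockProj e k (n + 1)

/-- The lower off-diagonal block `B n (W) = P (n+1) ∘ W ∘ P n`. -/
noncomputable def blockB (e : HilbertBasis ℕ+ ℂ H) (k : ℕ → ℕ) (n : ℕ) (W : H →L[ℂ] H) :
    H →L[ℂ] H :=
  blockProj e k (n + 1) ∘L W ∘L blockProj e k n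

set_option linter.unusedSectionVars false

namespace DNCAux

open Finset

local notation "⟪" x ", " y "⟫" => @inner ℂ _ _ x y

/-- The `i`-th basis vector, zero-indexed: `gv e i = e (i+1)`. -/
noncomputable def gv (e : HilbertBasis ℕ+ ℂ H) (i : ℕ) : H := e i.succPNat

lemma gv_inner (e : HilbertBasis ℕ+ ℂ H) (i j : ℕ) :
    ⟪gv e i, gv e j⟫ = if i = j then 1 else 0 := by
  have h := orthonormal_iff_ite.mp e.orthonormal i.succPNat j.succPNat
  simpa [gv, Nat.succPNat_inj] using h

lemma norm_gv (e : HilbertBasis ℕ+ ℂ H) (i : ℕ) : ‖gv e i‖ = 1 :=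
  e.orthonormal.1 i.succPNat

/-- Projection onto the span of the first `m` basis vectors. -/
noncomputable def Qv (e : HilbertBasis ℕ+ ℂ H) (m : ℕ) (x : H) : H :=
  ∑ i ∈ range m, ⟪gv e i, x⟫ • gv e i

/-- Tail of `x` after the first `m` coordinates. -/
noncomputable def tl (e : HilbertBasis ℕ+ ℂ H) (m : ℕ) (x : H) : H := x - Qv e m x

lemma Qv_add_tl (e : HilbertBasis ℕ+ ℂ H) (m : ℕ) (x : H) :
    Qv e m x + tl e m x = x := by simp [tl]

lemma inner_gv_Qv (e : HilbertBasis ℕ+ ℂ H) (m i : ℕ) (x : H) :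
    ⟪gv e i, Qv e m x⟫ = if i < m then ⟪gv e i, x⟫ else 0 := by
  rw [Qv, inner_sum]
  simp_rw [inner_smul_right, gv_inner, mul_ite, mul_one, mul_zero]
  rw [Finset.sum_ite_eq (range m) i (fun j => ⟪gv e j, x⟫)]
  simp [Finset.mem_range]

lemma inner_gv_tl (e : HilbertBasis ℕ+ ℂ H) {m i : ℕ} (h : i < m) (x : H) :
    ⟪gv e i, tl e m x⟫ = 0 := by
  simp [tl, inner_sub_right, inner_gv_Qv, h]

lemma inner_Qv_tl (e : HilbertBasis ℕ+ ℂ H) (m : ℕ) (x y : H) :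
    ⟪Qv e m y, tl e m x⟫ = 0 := by
  rw [Qv, sum_inner]
  refine Finset.sum_eq_zero fun j hj => ?_
  rw [inner_smul_left, inner_gv_tl e (mem_range.mp hj), mul_zero]

lemma inner_tl_left (e : HilbertBasis ℕ+ ℂ H) (m : ℕ) (x y : H) :
    ⟪y, tl e m x⟫ = ⟪tl e m y, tl e m x⟫ := by
  conv_lhs => rw [← Qv_add_tl e m y]
  rw [inner_add_left, inner_Qv_tl, zero_add]

lemma inner_tl_right (e : HilbertBasis ℕ+ ℂ H) (m : ℕ) (x y : H) :
    ⟪tl e m y, x⟫ = ⟪tl e m y, tl e m x⟫ := by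
  rw [← inner_conj_symm, inner_tl_left, inner_conj_symm]

lemma norm_tl_le (e : HilbertBasis ℕ+ ℂ H) (m : ℕ) (x : H) : ‖tl e m x‖ ≤ ‖x‖ := by
  have h := norm_add_sq_eq_norm_sq_add_norm_sq_of_inner_eq_zero (Qv e m x) (tl e m x)
    (inner_Qv_tl e m x x)
  rw [Qv_add_tl] at h
  nlinarith [norm_nonneg (tl e m x), norm_nonneg x, norm_nonneg (Qv e m x)]

lemma tl_smul (e : HilbertBasis ℕ+ ℂ H) (m : ℕ) (c : ℂ) (x : H) :
    tl e m (c • x) = c • tl e m x := by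
  simp only [tl, Qv, inner_smul_right, smul_sub, Finset.smul_sum, smul_smul]

lemma tl_sub (e : HilbertBasis ℕ+ ℂ H) (m : ℕ) (x y : H) :
    tl e m (x - y) = tl e m x - tl e m y := by
  simp only [tl, Qv, inner_sub_right, sub_smul, Finset.sum_sub_distrib]
  abel

lemma tl_zero (e : HilbertBasis ℕ+ ℂ H) (m : ℕ) : tl e m (0 : H) = 0 := by
  simp [tl, Qv]

lemma Qv_tl (e : HilbertBasis ℕ+ ℂ H) (m : ℕ) (x : H) : Qv e m (tl e m x) = 0 := by
  rw [Qv]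
  refine Finset.sum_eq_zero fun j hj => ?_
  rw [inner_gv_tl e (Finset.mem_range.mp hj), zero_smul]

lemma tl_idem (e : HilbertBasis ℕ+ ℂ H) (m : ℕ) (x : H) :
    tl e m (tl e m x) = tl e m x := by
  rw [tl, Qv_tl, sub_zero]

lemma tl_eq_zero (e : HilbertBasis ℕ+ ℂ H) (m : ℕ) (x : H)
    (h : ∀ i : ℕ, m ≤ i → ⟪gv e i, x⟫ = 0) : tl e m x = 0 := by
  have hall : ∀ p : ℕ+, ⟪e p, tl e m x⟫ = 0 := by
    intro p
    have hp : e p = gv e p.natPred := by rw [gv, PNat.succPNat_natPred]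
    rcases lt_or_ge p.natPred m with h' | h'
    · rw [hp]; exact inner_gv_tl e h' x
    · rw [hp, tl, inner_sub_right, h _ h', inner_gv_Qv]
      simp [not_lt.mpr h']
  have hrepr : e.repr (tl e m x) = 0 := by
    ext p
    simpa [e.repr_apply_apply] using hall p
  have := e.repr.injective (by rw [hrepr, map_zero] : e.repr (tl e m x) = e.repr 0)
  simpa using this

lemma tendsto_Qv (e : HilbertBasis ℕ+ ℂ H) (x : H) :
    Tendsto (fun m => Qv e m x) atTop (nhds x) := by
  have hs : HasSum (fun p : ℕ+ => ⟪e p, x⟫ • e p) x := by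
    simpa [e.repr_apply_apply] using e.hasSum_repr x
  have hs' : HasSum ((fun p : ℕ+ => ⟪e p, x⟫ • e p) ∘ Equiv.pnatEquivNat.symm) x :=
    (Equiv.pnatEquivNat.symm.hasSum_iff).mpr hs
  have key : ∀ m, ∑ i ∈ Finset.range m,
      ((fun p : ℕ+ => ⟪e p, x⟫ • e p) ∘ Equiv.pnatEquivNat.symm) i = Qv e m x := by
    intro m
    refine Finset.sum_congr rfl fun i _ => ?_
    simp [gv, Function.comp, Equiv.pnatEquivNat]
  have h2 := hs'.tendsto_sum_nat
  simpa only [key] using h2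

lemma tendsto_norm_tl (e : HilbertBasis ℕ+ ℂ H) (x : H) :
    Tendsto (fun m => ‖tl e m x‖) atTop (nhds 0) := by
  have h : Tendsto (fun m => tl e m x) atTop (nhds (x - x)) :=
    tendsto_const_nhds.sub (tendsto_Qv e x)
  rw [sub_self] at h
  simpa using h.norm


lemma image_ball_subset (C : H →L[ℂ] H) (hC : IsCompactOperator (⇑C)) :
    ∃ K : Set H, IsCompact K ∧ ∀ x : H, ‖x‖ ≤ 1 → C x ∈ K := by
  obtain ⟨K₀, hK₀, hmem⟩ := hC
  obtain ⟨r, hr, hball⟩ := Metric.mem_nhds_iff.mp hmem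
  set c : ℂ := ((r / 2 : ℝ) : ℂ) with hc
  have hcne : c ≠ 0 := by
    simp only [hc, ne_eq, Complex.ofReal_eq_zero]
    positivity
  refine ⟨(fun y => c⁻¹ • y) '' K₀, hK₀.image (continuous_const_smul _), fun x hx => ?_⟩
  have hmemb : c • x ∈ Metric.ball (0 : H) r := by
    rw [Metric.mem_ball, dist_zero_right, norm_smul]
    have : ‖c‖ = r / 2 := by
      rw [hc, Complex.norm_real, Real.norm_eq_abs, abs_of_pos (by positivity)]
    rw [this]
    nlinarith
  have : C (c • x) ∈ K₀ := hball hmemb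
  refine ⟨C (c • x), this, ?_⟩
  simp only [map_smul, smul_smul, inv_mul_cancel₀ hcne, one_smul]

lemma uniform_tail (e : HilbertBasis ℕ+ ℂ H) (C : H →L[ℂ] H)
    (hC : IsCompactOperator (⇑C)) {ε : ℝ} (hε : 0 < ε) :
    ∃ N : ℕ, ∀ m, N ≤ m → ∀ x : H, ‖x‖ ≤ 1 → ‖tl e m (C x)‖ ≤ ε := by
  obtain ⟨K, hK, hKmem⟩ := image_ball_subset C hC
  obtain ⟨t, ht, hcover⟩ := Metric.totallyBounded_iff.mp hK.totallyBounded (ε / 2) (by positivity)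
  have hchoice : ∀ y : H, ∃ N : ℕ, ∀ m, N ≤ m → ‖tl e m y‖ ≤ ε / 2 := by
    intro y
    have := (tendsto_norm_tl e y).eventually (eventually_le_nhds (by positivity : (0:ℝ) < ε / 2))
    exact (this.and (eventually_ge_atTop 0)).exists_forall_of_atTop.imp
      fun N hN => fun m hm => (hN m hm).1
  choose Nf hNf using hchoice
  refine ⟨ht.toFinset.sup Nf, fun m hm x hx => ?_⟩
  obtain ⟨y, hy, hxy⟩ := Set.mem_iUnion₂.mp (hcover (hKmem x hx))
  have h1 : ‖tl e m (C x - y)‖ ≤ ‖C x - y‖ := norm_tl_le e m _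
  have h2 : ‖tl e m y‖ ≤ ε / 2 := hNf y m (le_trans (Finset.le_sup (ht.mem_toFinset.mpr hy)) hm)
  have h3 : ‖C x - y‖ < ε / 2 := by
    rw [← dist_eq_norm]; exact Metric.mem_ball.mp hxy
  have hsplit : tl e m (C x) = tl e m (C x - y) + tl e m y := by
    rw [tl_sub]; abel
  calc ‖tl e m (C x)‖ ≤ ‖tl e m (C x - y)‖ + ‖tl e m y‖ := by rw [hsplit]; exact norm_add_le _ _
    _ ≤ ε / 2 + ε / 2 := by linarith
    _ = ε := by ring

lemma adjoint_tail (e : HilbertBasis ℕ+ ℂ H) (C : H →L[ℂ] H)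
    (hC : IsCompactOperator (⇑C)) {ε : ℝ} (hε : 0 < ε) :
    ∃ N : ℕ, ∀ m, N ≤ m → ∀ x : H, ‖x‖ ≤ 1 →
      ‖tl e m (ContinuousLinearMap.adjoint C x)‖ ≤ ε := by
  set C' := ContinuousLinearMap.adjoint C with hC'
  set G : H →L[ℂ] H := C' ∘L C with hG
  have hGc : IsCompactOperator (⇑G) := by
    have := hC.clm_comp C'
    simpa [hG, ContinuousLinearMap.coe_comp, Function.comp] using this
  set δ : ℝ := ε ^ 4 / ((‖C‖ + 1) ^ 2) with hδdef
  have hδ : 0 < δ := by positivity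
  obtain ⟨N, hN⟩ := uniform_tail e G hGc hδ
  refine ⟨N, fun m hm x hx => ?_⟩
  set u := tl e m (C' x) with hu
  have hunn : (0:ℝ) ≤ ‖u‖ := norm_nonneg _
  have huC : ‖u‖ ≤ ‖C‖ := by
    calc ‖u‖ ≤ ‖C' x‖ := norm_tl_le e m _
      _ ≤ ‖C'‖ * ‖x‖ := C'.le_opNorm x
      _ ≤ ‖C‖ * 1 := by
          rw [hC', ContinuousLinearMap.adjoint.norm_map C]
          exact mul_le_mul_of_nonneg_left hx (norm_nonneg C)
      _ = ‖C‖ := mul_one _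
  have e1 : (⟪u, u⟫ : ℂ) = ⟪x, C u⟫ := by
    calc (⟪u, u⟫ : ℂ) = ⟪C' x, u⟫ := by
          rw [hu]; exact (inner_tl_left e m (C' x) (C' x)).symm
      _ = ⟪x, C u⟫ := by rw [hC']; exact ContinuousLinearMap.adjoint_inner_left C u x
  have key1 : ‖u‖ ^ 2 ≤ ‖C u‖ := by
    have h1 : (‖u‖ : ℝ) ^ 2 = Complex.re ⟪x, C u⟫ := by
      rw [← e1]
      exact (inner_self_eq_norm_sq (𝕜 := ℂ) u).symm
    calc (‖u‖ : ℝ) ^ 2 = Complex.re ⟪x, C u⟫ := h1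
      _ ≤ ‖(⟪x, C u⟫ : ℂ)‖ := Complex.re_le_norm _
      _ ≤ ‖x‖ * ‖C u‖ := norm_inner_le_norm x (C u)
      _ ≤ 1 * ‖C u‖ := mul_le_mul_of_nonneg_right hx (norm_nonneg _)
      _ = ‖C u‖ := one_mul _
  have htlGu : ‖tl e m (G u)‖ ≤ δ * ‖u‖ := by
    rcases eq_or_ne u 0 with h0 | h0
    · simp [h0, tl_zero]
    · have hnu : (0:ℝ) < ‖u‖ := norm_pos_iff.mpr h0
      set s : ℂ := ((‖u‖⁻¹ : ℝ) : ℂ) with hs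
      have hsu : ‖s • u‖ ≤ 1 := by
        rw [norm_smul, hs, Complex.norm_real, Real.norm_eq_abs,
          abs_of_pos (by positivity)]
        rw [inv_mul_cancel₀ hnu.ne']
      have := hN m hm (s • u) hsu
      rw [map_smul, tl_smul, norm_smul, hs, Complex.norm_real, Real.norm_eq_abs,
        abs_of_pos (by positivity)] at this
      calc ‖tl e m (G u)‖ = ‖u‖ * (‖u‖⁻¹ * ‖tl e m (G u)‖) := by
            field_simp
        _ ≤ ‖u‖ * δ := mul_le_mul_of_nonneg_left this hnu.le
        _ = δ * ‖u‖ := mul_comm _ _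
  have key2 : ‖C u‖ ^ 2 ≤ ‖u‖ * (δ * ‖u‖) := by
    have e2 : (⟪C u, C u⟫ : ℂ) = ⟪u, tl e m (G u)⟫ := by
      calc (⟪C u, C u⟫ : ℂ) = ⟪u, C' (C u)⟫ := by
            rw [hC']; exact (ContinuousLinearMap.adjoint_inner_right C u (C u)).symm
        _ = ⟪u, G u⟫ := by rw [hG]; rfl
        _ = ⟪tl e m u, G u⟫ := by
            have hut : tl e m u = u := by rw [hu, tl_idem]
            rw [hut]
        _ = ⟪tl e m u, tl e m (G u)⟫ := inner_tl_right e m (G u) u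
        _ = ⟪u, tl e m (G u)⟫ := by
            have hut : tl e m u = u := by rw [hu, tl_idem]
            rw [hut]
    calc ‖C u‖ ^ 2 = Complex.re ⟪u, tl e m (G u)⟫ := by
          rw [← e2]; exact (inner_self_eq_norm_sq (𝕜 := ℂ) (C u)).symm
      _ ≤ ‖(⟪u, tl e m (G u)⟫ : ℂ)‖ := Complex.re_le_norm _
      _ ≤ ‖u‖ * ‖tl e m (G u)‖ := norm_inner_le_norm _ _
      _ ≤ ‖u‖ * (δ * ‖u‖) := mul_le_mul_of_nonneg_left htlGu (norm_nonneg _)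
  -- conclude ‖u‖ ≤ ε
  have hpow : ‖u‖ ^ 4 ≤ ε ^ 4 := by
    have s1 : (‖u‖ ^ 2) ^ 2 ≤ ‖C u‖ ^ 2 := pow_le_pow_left₀ (by positivity) key1 2
    have s3 : δ * ‖u‖ ^ 2 ≤ δ * ‖C‖ ^ 2 := by
      apply mul_le_mul_of_nonneg_left _ hδ.le
      exact pow_le_pow_left₀ hunn huC 2
    have s4 : δ * ‖C‖ ^ 2 ≤ ε ^ 4 := by
      have hpos : (0:ℝ) < (‖C‖ + 1) ^ 2 := by positivity
      rw [hδdef, div_mul_eq_mul_div, div_le_iff₀ hpos]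
      have h1 : ‖C‖ ^ 2 ≤ (‖C‖ + 1) ^ 2 := by nlinarith [norm_nonneg C]
      nlinarith [pow_nonneg hε.le 4]
    calc ‖u‖ ^ 4 = (‖u‖ ^ 2) ^ 2 := by ring
      _ ≤ ‖C u‖ ^ 2 := s1
      _ ≤ ‖u‖ * (δ * ‖u‖) := key2
      _ = δ * ‖u‖ ^ 2 := by ring
      _ ≤ δ * ‖C‖ ^ 2 := s3
      _ ≤ ε ^ 4 := s4
  exact le_of_pow_le_pow_left₀ (by norm_num) hε.le hpow


lemma cyclic (e : HilbertBasis ℕ+ ℂ H) (m : ℕ) (X Y : H →L[ℂ] H) :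
    ∑ i ∈ range m, ⟪gv e i, X (Qv e m (Y (gv e i)))⟫
      = ∑ i ∈ range m, ⟪gv e i, Y (Qv e m (X (gv e i)))⟫ := by
  have expand : ∀ (X Y : H →L[ℂ] H) (i : ℕ), ⟪gv e i, X (Qv e m (Y (gv e i)))⟫
      = ∑ j ∈ range m, ⟪gv e j, Y (gv e i)⟫ * ⟪gv e i, X (gv e j)⟫ := by
    intro X Y i
    rw [Qv, map_sum, inner_sum]
    simp_rw [map_smul, inner_smul_right]
  simp_rw [expand]
  rw [Finset.sum_comm]
  exact Finset.sum_congr rfl fun j _ => Finset.sum_congr rfl fun i _ => mul_comm _ _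

lemma trace_decomp (e : HilbertBasis ℕ+ ℂ H) (m : ℕ) (X Y : H →L[ℂ] H) :
    ∑ i ∈ range m, ⟪gv e i, (X ∘L Y - Y ∘L X) (gv e i)⟫
      = ∑ i ∈ range m, (⟪gv e i, X (tl e m (Y (gv e i)))⟫
          - ⟪gv e i, Y (tl e m (X (gv e i)))⟫) := by
  have h1 : ∀ i : ℕ, ⟪gv e i, (X ∘L Y - Y ∘L X) (gv e i)⟫
      = (⟪gv e i, X (Qv e m (Y (gv e i)))⟫ - ⟪gv e i, Y (Qv e m (X (gv e i)))⟫)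
        + (⟪gv e i, X (tl e m (Y (gv e i)))⟫ - ⟪gv e i, Y (tl e m (X (gv e i)))⟫) := by
    intro i
    have hY : X (Y (gv e i)) = X (Qv e m (Y (gv e i))) + X (tl e m (Y (gv e i))) := by
      rw [← map_add, Qv_add_tl]
    have hX : Y (X (gv e i)) = Y (Qv e m (X (gv e i))) + Y (tl e m (X (gv e i))) := by
      rw [← map_add, Qv_add_tl]
    simp only [ContinuousLinearMap.sub_apply, ContinuousLinearMap.comp_apply,
      inner_sub_right, hY, hX, inner_add_right]
    ring
  rw [Finset.sum_congr rfl fun i _ => h1 i, Finset.sum_add_distrib,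
    Finset.sum_sub_distrib, cyclic e m X Y, sub_self, zero_add]

lemma tridiag_gv (e : HilbertBasis ℕ+ ℂ H) (k : ℕ → ℕ) (W : H →L[ℂ] H)
    (hW : IsBlockTridiagonal e k W) {a b : ℕ}
    (hab : 2 ≤ |(blockIdx k (a + 1) : ℤ) - (blockIdx k (b + 1) : ℤ)|) :
    ⟪gv e a, W (gv e b)⟫ = 0 := by
  have := hW a.succPNat b.succPNat (by
    simpa [Nat.succPNat_coe, Nat.succ_eq_add_one] using hab)
  simpa [gv] using this


section Psum

variable (k : ℕ → ℕ)

lemma psum_mono : Monotone (psum k) := fun a b h =>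
  Finset.sum_le_sum_of_subset (Finset.Icc_subset_Icc_right h)

lemma self_le_psum (hk : ∀ n, 1 ≤ n → 1 ≤ k n) (i : ℕ) : i ≤ psum k i := by
  have h : ∑ j ∈ Finset.Icc 1 i, 1 ≤ psum k i :=
    Finset.sum_le_sum fun j hj => hk j (Finset.mem_Icc.mp hj).1
  simpa [Nat.card_Icc] using h

lemma blockIdx_le {i n : ℕ} (h : i ≤ psum k n) : blockIdx k i ≤ n := Nat.sInf_le h

lemma le_psum_blockIdx (hk : ∀ n, 1 ≤ n → 1 ≤ k n) (i : ℕ) :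
    i ≤ psum k (blockIdx k i) :=
  Nat.sInf_mem (⟨i, self_le_psum k hk i⟩ : {n | i ≤ psum k n}.Nonempty)

lemma lt_blockIdx (hk : ∀ n, 1 ≤ n → 1 ≤ k n) {i n : ℕ} (h : psum k n < i) :
    n < blockIdx k i := by
  by_contra h'
  push_neg at h'
  exact absurd (le_trans (le_psum_blockIdx k hk i) (psum_mono k h')) (not_le.mpr h)

lemma psum_succ_sub {n : ℕ} (hn : 1 ≤ n) : psum k n = psum k (n - 1) + k n := by
  obtain ⟨t, rfl⟩ := Nat.exists_eq_add_of_le hn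
  simp only [Nat.add_sub_cancel_left, add_tsub_cancel_left]
  have := Finset.sum_Icc_succ_top (Nat.le_add_left 1 t) k
  simpa [psum, Nat.add_comm 1 t] using this

lemma blockgap (hk : ∀ n, 1 ≤ n → 1 ≤ k n) {n i j : ℕ} (hn : 1 ≤ n)
    (hi : i + 1 ≤ psum k (n - 1)) (hj : psum k n < j + 1) :
    2 ≤ |(blockIdx k (i + 1) : ℤ) - (blockIdx k (j + 1) : ℤ)| := by
  have h1 : blockIdx k (i + 1) ≤ n - 1 := blockIdx_le k hi
  have h2 : n < blockIdx k (j + 1) := lt_blockIdx k hk hj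
  have h3 : blockIdx k (i + 1) + 1 ≤ n := by omega
  have : 2 ≤ (blockIdx k (j + 1) : ℤ) - (blockIdx k (i + 1) : ℤ) := by
    have := Nat.cast_le (α := ℤ) |>.mpr h3
    have := Nat.cast_lt (α := ℤ) |>.mpr h2
    push_cast at *
    omega
  rw [abs_sub_comm]
  exact le_trans this (le_abs_self _)

end Psum

end DNCAux

local notation "⟪" x ", " y "⟫" => @inner ℂ _ _ x y

open DNCAux Finset in
/-- Let `(d i)_{i ≥ 1}` be a bounded nonnegative sequence with
`limsup (1/k n) * (d 1 + ⋯ + d (s n)) > 0`, and let `D = diag d`. Then `D` is not the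
commutator of a compact operator `C` and a bounded operator `Z` with at least one of `C, Z`
block tridiagonal with central block sizes `k n`. -/
theorem diag_not_commutator_of_limsup_pos
    (e : HilbertBasis ℕ+ ℂ H) (k : ℕ → ℕ) (hk : ∀ n, 1 ≤ n → 1 ≤ k n)
    (d : ℕ → ℝ) (hdnn : ∀ i, 1 ≤ i → 0 ≤ d i) (hdbd : ∃ M : ℝ, ∀ i, 1 ≤ i → d i ≤ M)
    (hlimsup : ∃ c : ℝ, 0 < c ∧
      ∃ᶠ n in atTop, c ≤ (∑ j ∈ Finset.Icc 1 (psum k n), d j) / (k n : ℝ))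
    (D : H →L[ℂ] H) (hD : ∀ i : ℕ+, D (e i) = (d (i : ℕ) : ℂ) • e i) :
    ¬ ∃ C Z : H →L[ℂ] H, IsCompactOperator (⇑C) ∧
      (IsBlockTridiagonal e k C ∨ IsBlockTridiagonal e k Z) ∧
      D = C ∘L Z - Z ∘L C := by
  rintro ⟨C, Z, hCcpt, htri, hComm⟩
  obtain ⟨c, hc, hfreq⟩ := hlimsup
  classical
  have hεpos : (0:ℝ) < c / (4 * (‖Z‖ + 1)) := by positivity
  set ε : ℝ := c / (4 * (‖Z‖ + 1)) with hεdef
  obtain ⟨N₁, hN₁⟩ := uniform_tail e C hCcpt hεpos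
  obtain ⟨N₂, hN₂⟩ := adjoint_tail e C hCcpt hεpos
  obtain ⟨n, hnfreq, hnge⟩ :=
    (hfreq.and_eventually (eventually_ge_atTop (max 1 (max N₁ N₂)))).exists
  have hn1 : 1 ≤ n := le_trans (le_max_left _ _) hnge
  set m := psum k n with hm
  set m' := psum k (n - 1) with hm'
  have hmn : n ≤ m := self_le_psum k hk n
  have hmN₁ : N₁ ≤ m :=
    le_trans (le_trans (le_max_left _ _) (le_trans (le_max_right _ _) hnge)) hmn
  have hmN₂ : N₂ ≤ m :=
    le_trans (le_trans (le_max_right _ _) (le_trans (le_max_right _ _) hnge)) hmn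
  -- the diagonal sum
  have hDgv : ∀ i : ℕ, D (gv e i) = (d (i + 1) : ℂ) • gv e i := by
    intro i
    have := hD i.succPNat
    simpa [gv, Nat.succPNat_coe, Nat.succ_eq_add_one] using this
  have hdiag : ∀ i : ℕ, ⟪gv e i, D (gv e i)⟫ = (d (i + 1) : ℂ) := by
    intro i
    rw [hDgv i, inner_smul_right]
    have h1 : ⟪gv e i, gv e i⟫ = 1 := by rw [gv_inner, if_pos rfl]
    rw [h1, mul_one]
  have hsum1 : (↑(∑ j ∈ Finset.Icc 1 m, d j) : ℂ) = ∑ i ∈ Finset.range m, (d (i + 1) : ℂ) := by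
    push_cast
    rw [show Finset.Icc 1 m = Finset.Ico 1 (m + 1) from (Finset.Ico_add_one_right_eq_Icc 1 m).symm,
      Finset.sum_Ico_eq_sum_range]
    simp [Nat.add_comm 1]
  -- the commutator decomposition
  set F : ℕ → ℂ := fun i => ⟪gv e i, C (tl e m (Z (gv e i)))⟫
      - ⟪gv e i, Z (tl e m (C (gv e i)))⟫ with hF
  have hkey : (↑(∑ j ∈ Finset.Icc 1 m, d j) : ℂ) = ∑ i ∈ Finset.range m, F i := by
    rw [hsum1]
    calc ∑ i ∈ Finset.range m, (d (i + 1) : ℂ)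
        = ∑ i ∈ Finset.range m, ⟪gv e i, D (gv e i)⟫ :=
          Finset.sum_congr rfl fun i _ => (hdiag i).symm
      _ = ∑ i ∈ Finset.range m, ⟪gv e i, (C ∘L Z - Z ∘L C) (gv e i)⟫ := by rw [← hComm]
      _ = ∑ i ∈ Finset.range m, F i := trace_decomp e m C Z
  -- per-term bounds
  have hFbound : ∀ i ∈ Finset.range m, ‖F i‖ ≤ if m' ≤ i then 2 * (ε * ‖Z‖) else 0 := by
    intro i _
    by_cases hcase : m' ≤ i
    · rw [if_pos hcase]
      have hterm1 : ‖(⟪gv e i, C (tl e m (Z (gv e i)))⟫ : ℂ)‖ ≤ ε * ‖Z‖ := by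
        rw [← ContinuousLinearMap.adjoint_inner_left C (tl e m (Z (gv e i))) (gv e i),
          inner_tl_left e m]
        calc ‖(⟪tl e m ((ContinuousLinearMap.adjoint C) (gv e i)),
              tl e m (Z (gv e i))⟫ : ℂ)‖
            ≤ ‖tl e m ((ContinuousLinearMap.adjoint C) (gv e i))‖ * ‖tl e m (Z (gv e i))‖ :=
              norm_inner_le_norm _ _
          _ ≤ ε * ‖Z‖ := by
              apply mul_le_mul
              · exact hN₂ m hmN₂ (gv e i) (by rw [norm_gv])
              · calc ‖tl e m (Z (gv e i))‖ ≤ ‖Z (gv e i)‖ := norm_tl_le e m _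
                  _ ≤ ‖Z‖ * ‖gv e i‖ := Z.le_opNorm _
                  _ = ‖Z‖ := by rw [norm_gv, mul_one]
              · exact norm_nonneg _
              · exact hεpos.le
      have hterm2 : ‖(⟪gv e i, Z (tl e m (C (gv e i)))⟫ : ℂ)‖ ≤ ‖Z‖ * ε := by
        rw [← ContinuousLinearMap.adjoint_inner_left Z (tl e m (C (gv e i))) (gv e i),
          inner_tl_left e m]
        calc ‖(⟪tl e m ((ContinuousLinearMap.adjoint Z) (gv e i)),
              tl e m (C (gv e i))⟫ : ℂ)‖
            ≤ ‖tl e m ((ContinuousLinearMap.adjoint Z) (gv e i))‖ * ‖tl e m (C (gv e i))‖ :=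
              norm_inner_le_norm _ _
          _ ≤ ‖Z‖ * ε := by
              apply mul_le_mul
              · calc ‖tl e m ((ContinuousLinearMap.adjoint Z) (gv e i))‖
                    ≤ ‖(ContinuousLinearMap.adjoint Z) (gv e i)‖ := norm_tl_le e m _
                  _ ≤ ‖ContinuousLinearMap.adjoint Z‖ * ‖gv e i‖ :=
                      (ContinuousLinearMap.adjoint Z).le_opNorm _
                  _ = ‖Z‖ := by
                      rw [norm_gv, mul_one, ContinuousLinearMap.adjoint.norm_map]
              · exact hN₁ m hmN₁ (gv e i) (by rw [norm_gv])
              · exact norm_nonneg _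
              · exact norm_nonneg _
      calc ‖F i‖ ≤ ‖(⟪gv e i, C (tl e m (Z (gv e i)))⟫ : ℂ)‖
            + ‖(⟪gv e i, Z (tl e m (C (gv e i)))⟫ : ℂ)‖ := norm_sub_le _ _
        _ ≤ ε * ‖Z‖ + ‖Z‖ * ε := add_le_add hterm1 hterm2
        _ = 2 * (ε * ‖Z‖) := by ring
    · rw [if_neg hcase]
      push_neg at hcase
      have hi1 : i + 1 ≤ m' := hcase
      have hjgap : ∀ j : ℕ, m ≤ j →
          2 ≤ |(blockIdx k (i + 1) : ℤ) - (blockIdx k (j + 1) : ℤ)| := by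
        intro j hj
        exact blockgap k hk hn1 hi1 (by omega)
      rcases htri with hCt | hZt
      · -- C is block tridiagonal
        have hadj : tl e m ((ContinuousLinearMap.adjoint C) (gv e i)) = 0 := by
          apply tl_eq_zero
          intro j hj
          rw [ContinuousLinearMap.adjoint_inner_right]
          rw [← inner_conj_symm]
          rw [tridiag_gv e k C hCt (hjgap j hj), map_zero]
        have hdir : tl e m (C (gv e i)) = 0 := by
          apply tl_eq_zero
          intro j hj
          have := hjgap j hj
          rw [abs_sub_comm] at this
          exact tridiag_gv e k C hCt this
        have h1 : (⟪gv e i, C (tl e m (Z (gv e i)))⟫ : ℂ) = 0 := by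
          rw [← ContinuousLinearMap.adjoint_inner_left C (tl e m (Z (gv e i))) (gv e i),
            inner_tl_left e m, hadj, inner_zero_left]
        have h2 : (⟪gv e i, Z (tl e m (C (gv e i)))⟫ : ℂ) = 0 := by
          rw [hdir, map_zero, inner_zero_right]
        simp [hF, h1, h2]
      · -- Z is block tridiagonal
        have hdir : tl e m (Z (gv e i)) = 0 := by
          apply tl_eq_zero
          intro j hj
          have := hjgap j hj
          rw [abs_sub_comm] at this
          exact tridiag_gv e k Z hZt this
        have hadj : tl e m ((ContinuousLinearMap.adjoint Z) (gv e i)) = 0 := by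
          apply tl_eq_zero
          intro j hj
          rw [ContinuousLinearMap.adjoint_inner_right]
          rw [← inner_conj_symm]
          rw [tridiag_gv e k Z hZt (hjgap j hj), map_zero]
        have h1 : (⟪gv e i, C (tl e m (Z (gv e i)))⟫ : ℂ) = 0 := by
          rw [hdir, map_zero, inner_zero_right]
        have h2 : (⟪gv e i, Z (tl e m (C (gv e i)))⟫ : ℂ) = 0 := by
          rw [← ContinuousLinearMap.adjoint_inner_left Z (tl e m (C (gv e i))) (gv e i),
            inner_tl_left e m, hadj, inner_zero_left]
        simp [hF, h1, h2]
  -- sum bound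
  have hcard : ((Finset.range m).filter (fun i => m' ≤ i)).card = k n := by
    have hfil : (Finset.range m).filter (fun i => m' ≤ i) = Finset.Ico m' m := by
      ext i
      simp only [Finset.mem_filter, Finset.mem_range, Finset.mem_Ico]
      tauto
    rw [hfil, Nat.card_Ico]
    have := psum_succ_sub k (n := n) hn1
    omega
  have hbig : ‖∑ i ∈ Finset.range m, F i‖ ≤ (k n : ℝ) * (2 * (ε * ‖Z‖)) := by
    calc ‖∑ i ∈ Finset.range m, F i‖ ≤ ∑ i ∈ Finset.range m, ‖F i‖ :=
          norm_sum_le _ _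
      _ ≤ ∑ i ∈ Finset.range m, (if m' ≤ i then 2 * (ε * ‖Z‖) else 0) :=
          Finset.sum_le_sum hFbound
      _ = ((Finset.range m).filter (fun i => m' ≤ i)).card • (2 * (ε * ‖Z‖)) := by
          rw [← Finset.sum_filter, Finset.sum_const]
      _ = (k n : ℝ) * (2 * (ε * ‖Z‖)) := by
          rw [hcard, nsmul_eq_mul]
  have hnn : (0:ℝ) ≤ ∑ j ∈ Finset.Icc 1 m, d j :=
    Finset.sum_nonneg fun j hj => hdnn j (Finset.mem_Icc.mp hj).1
  have hrealsum : (∑ j ∈ Finset.Icc 1 m, d j) ≤ (k n : ℝ) * (2 * (ε * ‖Z‖)) := by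
    calc (∑ j ∈ Finset.Icc 1 m, d j) = ‖(↑(∑ j ∈ Finset.Icc 1 m, d j) : ℂ)‖ := by
          rw [Complex.norm_real, Real.norm_eq_abs, abs_of_nonneg hnn]
      _ = ‖∑ i ∈ Finset.range m, F i‖ := by rw [hkey]
      _ ≤ (k n : ℝ) * (2 * (ε * ‖Z‖)) := hbig
  have hkpos : (0:ℝ) < (k n : ℝ) := by
    exact_mod_cast Nat.lt_of_lt_of_le Nat.zero_lt_one (hk n hn1)
  have hdiv : (∑ j ∈ Finset.Icc 1 m, d j) / (k n : ℝ) ≤ 2 * (ε * ‖Z‖) := by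
    rw [div_le_iff₀ hkpos]
    linarith [hrealsum]
  have hlt : 2 * (ε * ‖Z‖) < c := by
    have h0 : (0:ℝ) < 4 * (‖Z‖ + 1) := by positivity
    have heq : 2 * (ε * ‖Z‖) = 2 * c * ‖Z‖ / (4 * (‖Z‖ + 1)) := by
      rw [hεdef]; ring
    rw [heq, div_lt_iff₀ h0]
    nlinarith [norm_nonneg Z]
  linarith [le_trans hnfreq hdiv]
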